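/- For every integer n ≥ 2 and every natural number t, P(Z > t) ≤ n · (1/2)^t. -/

import Mathlib

open MeasureTheory ProbabilityTheory Filter

/-- The Markov chain modeling the CD-P heuristic (unbounded reach), driven by a
sequence `U` of i.i.d. uniform random variables on `[0,1]`: it starts at `n`, and from a
state `m ≥ 1` it jumps to a uniformly chosen state in `{0, …, m-1}` (state `0` is absorbing). -/
noncomputable def chainR {Ω : Type*} (n : ℕ) (U : ℕ → Ω → ℝ) : ℕ → Ω → ℕ
  | 0 => fun _ => n
  | (t + 1) => fun ω => ⌊(chainR n U t ω : ℝ) * U (t + 1) ω⌋₊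

/-- `hitZ n U` is the hitting time of `0` for the chain `chainR n U`. -/
noncomputable def hitZ {Ω : Type*} (n : ℕ) (U : ℕ → Ω → ℝ) (ω : Ω) : ℕ :=
  sInf {t | chainR n U t ω = 0}

open scoped ENNReal

lemma chainR_measurable {Ω : Type*} [MeasurableSpace Ω] (n : ℕ) (U : ℕ → Ω → ℝ)
    (hmeas : ∀ i, Measurable (U i)) : ∀ t, Measurable (chainR n U t) := by
  intro t
  induction t with
  | zero => exact measurable_const
  | succ t ih =>
    exact (((measurable_from_top.comp ih : Measurable fun ω => ((chainR n U t ω : ℝ)))).mul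
      (hmeas (t+1))).nat_floor

lemma chainR_repr {Ω : Type*} [MeasurableSpace Ω] (n : ℕ) (U : ℕ → Ω → ℝ) (t : ℕ) :
    ∃ g : ((Finset.range (t+1) : Finset ℕ) → ℝ) → ℕ, Measurable g ∧
      ∀ ω, chainR n U t ω = g (fun i => U i ω) := by
  induction t with
  | zero => exact ⟨fun _ => n, measurable_const, fun ω => rfl⟩
  | succ t ih =>
    obtain ⟨g, hg, hgeq⟩ := ih
    have hsub : ∀ i : (Finset.range (t+1) : Finset ℕ), (i : ℕ) ∈ Finset.range (t+2) := by
      intro i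
      have := Finset.mem_range.1 i.2
      exact Finset.mem_range.2 (by omega)
    refine ⟨fun v => ⌊(g (fun i => v ⟨i, hsub i⟩) : ℝ) * v ⟨t+1, Finset.self_mem_range_succ _⟩⌋₊,
      ?_, ?_⟩
    · apply Measurable.nat_floor
      apply Measurable.mul
      · exact measurable_from_top.comp
          (hg.comp (measurable_pi_lambda _ fun i => measurable_pi_apply _))
      · exact measurable_pi_apply _
    · intro ω
      show (⌊(chainR n U t ω : ℝ) * U (t+1) ω⌋₊ : ℕ) = _
      rw [hgeq ω]

lemma floor_cast_le (m : ℕ) (u : ℝ) :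
    ((⌊(m:ℝ)*u⌋₊ : ℕ) : ℝ≥0∞) ≤ (m:ℝ≥0∞) * ENNReal.ofReal u := by
  rcases le_or_gt u 0 with hu | hu
  · have : (m:ℝ) * u ≤ 0 := mul_nonpos_of_nonneg_of_nonpos (Nat.cast_nonneg m) hu
    rw [Nat.floor_of_nonpos this]
    simp
  · have h0 : (0:ℝ) ≤ (m:ℝ) * u := by positivity
    calc ((⌊(m:ℝ)*u⌋₊ : ℕ) : ℝ≥0∞) = ENNReal.ofReal ((⌊(m:ℝ)*u⌋₊ : ℕ) : ℝ) := by
          rw [ENNReal.ofReal_natCast]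
      _ ≤ ENNReal.ofReal ((m:ℝ)*u) := ENNReal.ofReal_le_ofReal (Nat.floor_le h0)
      _ = (m:ℝ≥0∞) * ENNReal.ofReal u := by
          rw [ENNReal.ofReal_mul (Nat.cast_nonneg m), ENNReal.ofReal_natCast]

lemma unif_lintegral {Ω : Type*} [MeasureSpace Ω] [IsProbabilityMeasure (ℙ : Measure Ω)]
    (V : Ω → ℝ) (hm : Measurable V)
    (hu : Measure.map V ℙ = (volume : Measure ℝ).restrict (Set.Icc 0 1)) :
    ∫⁻ ω, ENNReal.ofReal (V ω) ∂ℙ = 2⁻¹ := by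
  have h1 : ∫⁻ ω, ENNReal.ofReal (V ω) ∂ℙ = ∫⁻ x, ENNReal.ofReal x ∂(Measure.map V ℙ) :=
    (lintegral_map ENNReal.measurable_ofReal hm).symm
  have h2 : ENNReal.ofReal (1/2 : ℝ) = (2:ℝ≥0∞)⁻¹ := by
    rw [one_div, ENNReal.ofReal_inv_of_pos two_pos]
    norm_num
  rw [h1, hu, ← h2, ← ofReal_integral_eq_lintegral_ofReal]
  · congr 1
    rw [MeasureTheory.integral_Icc_eq_integral_Ioc,
      ← intervalIntegral.integral_of_le (zero_le_one)]
    simp [integral_id]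
  · exact (continuous_id.integrableOn_Icc)
  · filter_upwards [ae_restrict_mem measurableSet_Icc] with x hx using hx.1

lemma chainR_lintegral_le {Ω : Type*} [MeasureSpace Ω] [IsProbabilityMeasure (ℙ : Measure Ω)]
    (U : ℕ → Ω → ℝ) (hmeas : ∀ i, Measurable (U i))
    (hindep : iIndepFun U ℙ)
    (hunif : ∀ i, Measure.map (U i) ℙ = (volume : Measure ℝ).restrict (Set.Icc 0 1))
    (n : ℕ) : ∀ t, ∫⁻ ω, (chainR n U t ω : ℝ≥0∞) ∂ℙ ≤ (n : ℝ≥0∞) * 2⁻¹ ^ t := by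
  intro t
  induction t with
  | zero => simp [chainR]
  | succ t ih =>
    obtain ⟨g, hg, hgeq⟩ := chainR_repr (Ω := Ω) n U t
    -- independence of chainR t (as ℝ≥0∞) and ofReal (U (t+1))
    have hdisj : Disjoint (Finset.range (t+1)) ({t+1} : Finset ℕ) := by
      simp [Finset.disjoint_singleton_right]
    have hbase := hindep.indepFun_finset (Finset.range (t+1)) {t+1} hdisj hmeas
    have hφ : Measurable (fun v : ((Finset.range (t+1) : Finset ℕ) → ℝ) =>
        ((g v : ℕ) : ℝ≥0∞)) := measurable_from_top.comp hg
    have hψ : Measurable (fun w : (({t+1} : Finset ℕ) : Finset ℕ) → ℝ =>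
        ENNReal.ofReal (w ⟨t+1, Finset.mem_singleton_self _⟩)) :=
      ENNReal.measurable_ofReal.comp (measurable_pi_apply _)
    have hind := hbase.comp hφ hψ
    have heq1 : ((fun v : ((Finset.range (t+1) : Finset ℕ) → ℝ) => ((g v : ℕ) : ℝ≥0∞)) ∘
        (fun ω (i : (Finset.range (t+1) : Finset ℕ)) => U i ω))
        = fun ω => ((chainR n U t ω : ℕ) : ℝ≥0∞) := by
      funext ω; simp [Function.comp, ← hgeq ω]
    have heq2 : ((fun w : (({t+1} : Finset ℕ) : Finset ℕ) → ℝ =>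
        ENNReal.ofReal (w ⟨t+1, Finset.mem_singleton_self _⟩)) ∘
        (fun ω (i : (({t+1} : Finset ℕ) : Finset ℕ)) => U i ω))
        = fun ω => ENNReal.ofReal (U (t+1) ω) := rfl
    rw [heq1, heq2] at hind
    have hmf : Measurable (fun ω => ((chainR n U t ω : ℕ) : ℝ≥0∞)) :=
      measurable_from_top.comp (chainR_measurable n U hmeas t)
    have hmg : Measurable (fun ω => ENNReal.ofReal (U (t+1) ω)) :=
      ENNReal.measurable_ofReal.comp (hmeas (t+1))
    calc ∫⁻ ω, (chainR n U (t+1) ω : ℝ≥0∞) ∂ℙ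
        ≤ ∫⁻ ω, (chainR n U t ω : ℝ≥0∞) * ENNReal.ofReal (U (t+1) ω) ∂ℙ := by
          apply lintegral_mono
          intro ω
          exact floor_cast_le (chainR n U t ω) (U (t+1) ω)
      _ = (∫⁻ ω, (chainR n U t ω : ℝ≥0∞) ∂ℙ) * ∫⁻ ω, ENNReal.ofReal (U (t+1) ω) ∂ℙ :=
          lintegral_mul_eq_lintegral_mul_lintegral_of_indepFun hmf hmg hind
      _ = (∫⁻ ω, (chainR n U t ω : ℝ≥0∞) ∂ℙ) * 2⁻¹ := by
          rw [unif_lintegral (U (t+1)) (hmeas (t+1)) (hunif (t+1))]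
      _ ≤ ((n : ℝ≥0∞) * 2⁻¹ ^ t) * 2⁻¹ := by
          exact mul_le_mul_left ih _
      _ = (n : ℝ≥0∞) * 2⁻¹ ^ (t+1) := by ring

/-- For every integer `n ≥ 2` and every natural number `t`,
`P(Z > t) ≤ n · (1/2)^t`. -/
theorem cdp_tail_bound
    (Ω : Type*) [MeasureSpace Ω] [IsProbabilityMeasure (ℙ : Measure Ω)]
    (U : ℕ → Ω → ℝ) (hmeas : ∀ i, Measurable (U i))
    (hindep : iIndepFun U ℙ)
    (hunif : ∀ i, Measure.map (U i) ℙ = (volume : Measure ℝ).restrict (Set.Icc 0 1))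
    (n : ℕ) (hn : 2 ≤ n) (t : ℕ) :
    (ℙ {ω | t < hitZ n U ω}).toReal ≤ (n : ℝ) * (1 / 2) ^ t := by
  have hsub : {ω | t < hitZ n U ω} ⊆ {ω | 1 ≤ ((chainR n U t ω : ℕ) : ℝ≥0∞)} := by
    intro ω hω
    simp only [Set.mem_setOf_eq] at hω ⊢
    by_contra h
    have h0 : chainR n U t ω = 0 := by
      by_contra h0
      exact h (by exact_mod_cast Nat.one_le_iff_ne_zero.2 h0)
    have : hitZ n U ω ≤ t := Nat.sInf_le h0
    omega
  have hmf : Measurable (fun ω => ((chainR n U t ω : ℕ) : ℝ≥0∞)) :=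
    measurable_from_top.comp (chainR_measurable n U hmeas t)
  have hmarkov : ℙ {ω | t < hitZ n U ω} ≤ ∫⁻ ω, (chainR n U t ω : ℝ≥0∞) ∂ℙ := by
    calc ℙ {ω | t < hitZ n U ω} ≤ ℙ {ω | 1 ≤ ((chainR n U t ω : ℕ) : ℝ≥0∞)} :=
          measure_mono hsub
      _ = 1 * ℙ {ω | 1 ≤ ((chainR n U t ω : ℕ) : ℝ≥0∞)} := (one_mul _).symm
      _ ≤ ∫⁻ ω, (chainR n U t ω : ℝ≥0∞) ∂ℙ :=
          mul_meas_ge_le_lintegral₀ hmf.aemeasurable 1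
  have hkey : ℙ {ω | t < hitZ n U ω} ≤ (n : ℝ≥0∞) * 2⁻¹ ^ t :=
    hmarkov.trans (chainR_lintegral_le U hmeas hindep hunif n t)
  have hofr : (n : ℝ≥0∞) * 2⁻¹ ^ t = ENNReal.ofReal ((n : ℝ) * (1/2) ^ t) := by
    rw [ENNReal.ofReal_mul (Nat.cast_nonneg n), ENNReal.ofReal_natCast,
      ENNReal.ofReal_pow (by norm_num)]
    congr 2
    rw [one_div, ENNReal.ofReal_inv_of_pos two_pos]
    norm_num
  rw [hofr] at hkey
  exact ENNReal.toReal_le_of_le_ofReal (by positivity) hkey
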